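/- arXiv:2211.02097 — 2 statements merged into one kernel-verified Lean document; each statement's English description precedes it below -/
import Mathlib

section
/- If Y ~ UW(μ, λ; ρ), then E[ (log Y / log μ)^λ · log(log Y / log μ) ] = (κ + log(-log ρ) - 1)/(λ·log ρ), where κ is the Euler–Mascheroni constant. -/
open Real MeasureTheory Set Filter Asymptotics

lemma uw_aux_mellin :
    IntegrableOn (fun t : ℝ => (t : ℂ) ^ ((2:ℂ) - 1) • (Real.log t • ((Real.exp (-t) : ℝ) : ℂ)))
      (Ioi 0) := by
  have h := mellin_hasDerivAt_of_isBigO_rpow (E := ℂ) (a := 3) (b := 0)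
    (f := fun t => ((Real.exp (-t) : ℝ) : ℂ)) (s := 2) ?_ ?_ (by norm_num) ?_ (by norm_num)
  · exact h.1
  · refine (Continuous.continuousOn ?_).locallyIntegrableOn measurableSet_Ioi
    exact Complex.continuous_ofReal.comp (Real.continuous_exp.comp continuous_neg)
  · rw [← isBigO_norm_left]
    simp_rw [Complex.norm_real, isBigO_norm_left]
    simpa only [neg_one_mul] using (isLittleO_exp_neg_mul_rpow_atTop zero_lt_one _).isBigO
  · simp_rw [neg_zero, Real.rpow_zero]
    refine isBigO_const_of_tendsto (?_ : Tendsto _ _ (nhds (1 : ℂ))) one_ne_zero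
    rw [(by simp : (1 : ℂ) = Real.exp (-0))]
    exact (Complex.continuous_ofReal.comp
      (Real.continuous_exp.comp continuous_neg)).continuousWithinAt

lemma uw_aux_integrable :
    IntegrableOn (fun t : ℝ => t * Real.log t * Real.exp (-t)) (Ioi 0) := by
  have h := uw_aux_mellin
  have h2 : IntegrableOn (fun t : ℝ => ((t * Real.log t * Real.exp (-t) : ℝ) : ℂ)) (Ioi 0) := by
    refine h.congr_fun (fun t ht => ?_) measurableSet_Ioi
    simp only [show ((2:ℂ) - 1) = 1 by norm_num, Complex.cpow_one, Complex.real_smul,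
      smul_eq_mul, Complex.ofReal_mul]
    ring
  have h3 : IntegrableOn
      (fun x : ℝ => RCLike.re ((x * Real.log x * Real.exp (-x) : ℝ) : ℂ)) (Ioi 0) := h2.re
  refine h3.congr_fun (fun t ht => ?_) measurableSet_Ioi
  exact RCLike.ofReal_re _

lemma uw_aux_value :
    ∫ t in Ioi (0:ℝ), t * Real.log t * Real.exp (-t)
      = 1 - Real.eulerMascheroniConstant := by
  have hd := Complex.hasDerivAt_GammaIntegral (s := 2) (by norm_num)
  have hev : Complex.Gamma =ᶠ[nhds (2:ℂ)] Complex.GammaIntegral := by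
    have hopen : IsOpen {z : ℂ | 0 < z.re} := isOpen_lt continuous_const Complex.continuous_re
    filter_upwards [hopen.mem_nhds (by norm_num : (0:ℝ) < (2:ℂ).re)] with z hz
    exact Complex.Gamma_eq_integral hz
  have hG := hd.congr_of_eventuallyEq hev
  have hG2 := Complex.hasDerivAt_Gamma_nat 1
  have h11 : ((1:ℕ) + 1 : ℂ) = 2 := by norm_num
  rw [h11] at hG2
  have huniq := hG.unique hG2
  have hco : ∀ r : ℝ, Complex.ofReal r = @RCLike.ofReal ℂ _ r := fun r => rfl
  have hI : (∫ t : ℝ in Ioi 0, (t:ℂ) ^ ((2:ℂ) - 1) * ((Real.log t : ℂ) * (Real.exp (-t) : ℂ)))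
      = ((∫ t in Ioi (0:ℝ), t * Real.log t * Real.exp (-t) : ℝ) : ℂ) := by
    conv_rhs => rw [hco, ← _root_.integral_ofReal]
    refine setIntegral_congr_fun measurableSet_Ioi fun t ht => ?_
    conv_rhs => rw [← hco]
    simp only [show ((2:ℂ) - 1) = 1 by norm_num, Complex.cpow_one, Complex.ofReal_mul]
    ring
  rw [hI] at huniq
  have h1 : ((Nat.factorial 1 : ℕ) : ℂ) * (-(Real.eulerMascheroniConstant:ℂ) + ((harmonic 1 : ℚ) : ℂ))
      = ((1 - Real.eulerMascheroniConstant : ℝ) : ℂ) := by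
    have : harmonic 1 = 1 := by rw [harmonic_succ, harmonic_zero]; norm_num
    rw [this, Nat.factorial_one]
    push_cast
    ring
  rw [h1] at huniq
  exact_mod_cast huniq


lemma uw_aux_integrable2 :
    IntegrableOn (fun t : ℝ => t * Real.exp (-t)) (Ioi 0) := by
  have h := Real.GammaIntegral_convergent (by norm_num : (0:ℝ) < 2)
  refine h.congr_fun (fun t ht => ?_) measurableSet_Ioi
  simp only [show (2:ℝ) - 1 = 1 by norm_num, Real.rpow_one]
  ring

lemma uw_aux_value2 : ∫ t in Ioi (0:ℝ), t * Real.exp (-t) = 1 := by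
  rw [← Real.Gamma_two, Real.Gamma_eq_integral (by norm_num : (0:ℝ) < 2)]
  refine setIntegral_congr_fun measurableSet_Ioi fun t ht => ?_
  rw [show (2:ℝ) - 1 = 1 by norm_num, Real.rpow_one]
  ring

lemma uw_aux_scaled {c : ℝ} (hc : 0 < c) :
    ∫ t in Ioi (0:ℝ), t * Real.log t * Real.exp (-(c*t))
      = (1 - Real.eulerMascheroniConstant - Real.log c) / c^2 := by
  have h := MeasureTheory.integral_comp_mul_left_Ioi
    (fun u => (u/c) * Real.log (u/c) * Real.exp (-u)) 0 hc
  rw [mul_zero] at h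
  have h1 : ∫ t in Ioi (0:ℝ), t * Real.log t * Real.exp (-(c*t))
      = ∫ x in Ioi (0:ℝ), (c*x/c) * Real.log (c*x/c) * Real.exp (-(c*x)) := by
    refine setIntegral_congr_fun measurableSet_Ioi fun t ht => ?_
    rw [mul_div_cancel_left₀ _ hc.ne']
  have h2 : ∫ u in Ioi (0:ℝ), (u/c) * Real.log (u/c) * Real.exp (-u)
      = (1/c) * (1 - Real.eulerMascheroniConstant) - (Real.log c / c) * 1 := by
    have e : ∫ u in Ioi (0:ℝ), (u/c) * Real.log (u/c) * Real.exp (-u)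
        = ∫ u in Ioi (0:ℝ), ((1/c) * (u * Real.log u * Real.exp (-u))
            - (Real.log c / c) * (u * Real.exp (-u))) := by
      refine setIntegral_congr_fun measurableSet_Ioi fun u hu => ?_
      rw [Real.log_div (ne_of_gt hu) hc.ne']
      ring
    rw [e, integral_sub ((uw_aux_integrable.const_mul _))
      ((uw_aux_integrable2.const_mul _)), integral_const_mul, integral_const_mul,
      uw_aux_value, uw_aux_value2]
  rw [h1, h, h2, smul_eq_mul, eq_div_iff (by positivity : (c:ℝ)^2 ≠ 0)]
  field_simp

lemma uw_aux_rpow {c lam : ℝ} (hc : 0 < c) (hlam : 0 < lam) :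
    ∫ t in Ioi (0:ℝ), t ^ (2*lam - 1) * Real.log t * Real.exp (-(c * t ^ lam))
      = (1/lam^2) * ((1 - Real.eulerMascheroniConstant - Real.log c) / c^2) := by
  have h := integral_comp_rpow_Ioi_of_pos
    (g := fun u => (1/lam^2) * (u * Real.log u * Real.exp (-(c*u)))) hlam
  have h1 : ∫ t in Ioi (0:ℝ), t ^ (2*lam - 1) * Real.log t * Real.exp (-(c * t ^ lam))
      = ∫ x in Ioi (0:ℝ), (lam * x ^ (lam - 1)) •
          ((1/lam^2) * (x ^ lam * Real.log (x ^ lam) * Real.exp (-(c * x ^ lam)))) := by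
    refine setIntegral_congr_fun measurableSet_Ioi fun x hx => ?_
    rw [Real.log_rpow hx, smul_eq_mul]
    rw [show (2*lam - 1) = lam + (lam - 1) by ring, Real.rpow_add hx]
    field_simp
  rw [h1, h, integral_const_mul, uw_aux_scaled hc]


theorem uw_moment_Alam_logA
    (ρ μ lam : ℝ) (hρ : ρ ∈ Set.Ioo (0:ℝ) 1) (hμ : μ ∈ Set.Ioo (0:ℝ) 1) (hlam : 0 < lam) :
    ∫ y in (0:ℝ)..1,
      (Real.log y / Real.log μ) ^ lam * Real.log (Real.log y / Real.log μ) *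
        ((lam / y) * (Real.log ρ / Real.log μ) *
          (Real.log y / Real.log μ) ^ (lam - 1) *
          ρ ^ ((Real.log y / Real.log μ) ^ lam))
      = (Real.eulerMascheroniConstant + Real.log (-Real.log ρ) - 1) / (lam * Real.log ρ) := by
  obtain ⟨hρ0, hρ1⟩ := hρ
  obtain ⟨hμ0, hμ1⟩ := hμ
  have hlogμ : Real.log μ < 0 := Real.log_neg hμ0 hμ1
  have hlogρ : Real.log ρ < 0 := Real.log_neg hρ0 hρ1
  have hcpos : 0 < -Real.log ρ := neg_pos.mpr hlogρ
  set F : ℝ → ℝ := fun y => (Real.log y / Real.log μ) ^ lam * Real.log (Real.log y / Real.log μ) *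
        ((lam / y) * (Real.log ρ / Real.log μ) *
          (Real.log y / Real.log μ) ^ (lam - 1) *
          ρ ^ ((Real.log y / Real.log μ) ^ lam)) with hF
  rw [intervalIntegral.integral_of_le zero_le_one, MeasureTheory.integral_Ioc_eq_integral_Ioo]
  have hderiv : ∀ t ∈ Ioi (0:ℝ), HasDerivWithinAt (fun t : ℝ => Real.exp (t * Real.log μ))
      (Real.log μ * Real.exp (t * Real.log μ)) (Ioi 0) t := by
    intro t ht
    have h := (Real.hasDerivAt_exp (t * Real.log μ)).comp t
      ((hasDerivAt_id t).mul_const (Real.log μ))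
    simpa [mul_comm, Function.comp_def] using h.hasDerivWithinAt
  have hinj : InjOn (fun t : ℝ => Real.exp (t * Real.log μ)) (Ioi 0) := by
    have : StrictAntiOn (fun t : ℝ => Real.exp (t * Real.log μ)) (Ioi 0) := by
      intro x hx y hy hxy
      exact Real.exp_lt_exp.mpr (mul_lt_mul_of_neg_right hxy hlogμ)
    exact this.injOn
  have himg : (fun t : ℝ => Real.exp (t * Real.log μ)) '' (Ioi 0) = Ioo 0 1 := by
    ext x
    simp only [mem_image, mem_Ioo, mem_Ioi]
    constructor
    · rintro ⟨t, ht, rfl⟩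
      exact ⟨Real.exp_pos _, Real.exp_lt_one_iff.mpr (mul_neg_of_pos_of_neg ht hlogμ)⟩
    · rintro ⟨hx0, hx1⟩
      refine ⟨Real.log x / Real.log μ, ?_, ?_⟩
      · exact div_pos_of_neg_of_neg (Real.log_neg hx0 hx1) hlogμ
      · rw [div_mul_cancel₀ _ (ne_of_lt hlogμ), Real.exp_log hx0]
  have hsub := integral_image_eq_integral_abs_deriv_smul measurableSet_Ioi hderiv hinj F
  rw [himg] at hsub
  rw [hsub]
  have hpt : ∀ t ∈ Ioi (0:ℝ),
      |Real.log μ * Real.exp (t * Real.log μ)| • F (Real.exp (t * Real.log μ))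
        = (-lam * Real.log ρ) *
            (t ^ (2*lam - 1) * Real.log t * Real.exp (-(-Real.log ρ * t ^ lam))) := by
    intro t ht
    have htpos : (0:ℝ) < t := ht
    have hE : 0 < Real.exp (t * Real.log μ) := Real.exp_pos _
    have hlogE : Real.log (Real.exp (t * Real.log μ)) / Real.log μ = t := by
      rw [Real.log_exp, mul_div_cancel_right₀ _ (ne_of_lt hlogμ)]
    rw [smul_eq_mul, hF]
    simp only [hlogE]
    rw [Real.rpow_def_of_pos hρ0 (t ^ lam),
      abs_mul, abs_of_neg hlogμ, abs_of_pos hE,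
      show Real.log ρ * t ^ lam = -(-Real.log ρ * t ^ lam) by ring,
      show (2*lam - 1) = lam + (lam - 1) by ring, Real.rpow_add htpos]
    field_simp [hE.ne', ne_of_lt hlogμ]
  rw [setIntegral_congr_fun measurableSet_Ioi hpt, integral_const_mul,
    uw_aux_rpow hcpos hlam]
  have h1 : lam ≠ 0 := hlam.ne'
  have h2 : Real.log ρ ≠ 0 := ne_of_lt hlogρ
  field_simp
  ring
end

section
/- Expected second derivative of the UW log-likelihood in μ: if Y ~ UW(μ, λ; ρ) and A = log Y / log μ, then E[ (λ(log μ + 1)(1 + log(ρ)·A^λ) + λ²·log(ρ)·A^λ) / (μ²·(log μ)²) ] = −λ² / (μ²·(log μ)²). -/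
open Real

open Set Filter MeasureTheory

lemma myFTC_Ioc {a b l : ℝ} (hab : a < b) {g g' : ℝ → ℝ}
    (hcont : ContinuousOn g (Set.Ioc a b))
    (hderiv : ∀ x ∈ Set.Ioo a b, HasDerivAt g (g' x) x)
    (hpos : ∀ x ∈ Set.Ioo a b, 0 ≤ g' x)
    (hlim : Tendsto g (nhdsWithin a (Set.Ioi a)) (nhds l)) :
    MeasureTheory.IntegrableOn g' (Set.Ioc a b) ∧ ∫ x in a..b, g' x = g b - l := by
  -- monotonicity
  have hmono : ∀ x ∈ Set.Ioc a b, ∀ y ∈ Set.Ioc a b, x ≤ y → g x ≤ g y := by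
    intro x hx y hy hxy
    have hsub : Set.Icc x b ⊆ Set.Ioc a b := fun z hz => ⟨lt_of_lt_of_le hx.1 hz.1, hz.2⟩
    have hm : MonotoneOn g (Set.Icc x b) := by
      apply monotoneOn_of_deriv_nonneg (convex_Icc x b) (hcont.mono hsub)
      · intro z hz
        rw [interior_Icc] at hz
        exact ((hderiv z ⟨hx.1.trans hz.1, hz.2⟩).differentiableAt).differentiableWithinAt
      · intro z hz
        rw [interior_Icc] at hz
        have hz' : z ∈ Set.Ioo a b := ⟨lt_of_lt_of_le hx.1 hz.1.le, hz.2⟩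
        rw [(hderiv z hz').deriv]
        exact hpos z hz'
    exact hm ⟨le_refl x, hx.2⟩ ⟨hxy, hy.2⟩ hxy
  have hge : ∀ x ∈ Set.Ioc a b, l ≤ g x := by
    intro x hx
    refine le_of_tendsto hlim ?_
    filter_upwards [Ioo_mem_nhdsGT_of_mem (Set.left_mem_Ico.2 hx.1)] with z hz
    exact hmono z ⟨hz.1, hz.2.le.trans hx.2⟩ x hx hz.2.le
  -- integrability
  have haseq : ∀ n : ℕ, a < a + (b - a) * (1 / (n + 1)) ∧ a + (b - a) * (1 / (n + 1)) ≤ b := by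
    intro n
    have h1 : (0:ℝ) < 1 / (n + 1) := by positivity
    have h2 : (1:ℝ) / (n + 1) ≤ 1 := by
      rw [div_le_one (by positivity)]
      simp
    constructor
    · nlinarith
    · nlinarith
  have htend : Tendsto (fun n : ℕ => a + (b - a) * (1 / (n + 1))) atTop (nhds a) := by
    have := tendsto_one_div_add_atTop_nhds_zero_nat (𝕜 := ℝ)
    have h2 := (this.const_mul (b - a)).const_add a
    simpa using h2
  have hfi : ∀ n : ℕ, IntegrableOn g' (Set.Ioc (a + (b - a) * (1 / (n + 1))) b) := by
    intro n
    obtain ⟨h1, h2⟩ := haseq n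
    refine intervalIntegral.integrableOn_deriv_of_nonneg (hcont.mono ?_) (fun z hz => hderiv z ⟨h1.trans hz.1, hz.2⟩) (fun z hz => hpos z ⟨h1.trans_le hz.1.le, hz.2⟩)
    exact fun z hz => ⟨h1.trans_le hz.1, hz.2⟩
  have hFTCn : ∀ n : ℕ, ∫ x in (a + (b - a) * (1 / (n + 1)))..b, g' x
      = g b - g (a + (b - a) * (1 / (n + 1))) := by
    intro n
    obtain ⟨h1, h2⟩ := haseq n
    refine intervalIntegral.integral_eq_sub_of_hasDerivAt_of_le h2 (hcont.mono ?_)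
      (fun z hz => hderiv z ⟨h1.trans_le hz.1.le, hz.2⟩) ?_
    · exact fun z hz => ⟨h1.trans_le hz.1, hz.2⟩
    · exact (intervalIntegrable_iff_integrableOn_Ioc_of_le h2).2 (hfi n)
  have hbound : ∀ n : ℕ, (∫ x in Set.Ioc (a + (b - a) * (1 / (n + 1))) b, ‖g' x‖) ≤ g b - l := by
    intro n
    obtain ⟨h1, h2⟩ := haseq n
    have heq : (∫ x in Set.Ioc (a + (b - a) * (1 / (n + 1))) b, ‖g' x‖)
        = ∫ x in Set.Ioc (a + (b - a) * (1 / (n + 1))) b, g' x := by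
      rw [MeasureTheory.integral_Ioc_eq_integral_Ioo, MeasureTheory.integral_Ioc_eq_integral_Ioo]
      refine setIntegral_congr_fun measurableSet_Ioo fun z hz => ?_
      exact norm_of_nonneg (hpos z ⟨h1.trans_le hz.1.le, hz.2⟩)
    rw [heq, ← intervalIntegral.integral_of_le h2, hFTCn n]
    have := hge _ ⟨h1, h2⟩
    linarith
  have hInt : IntegrableOn g' (Set.Ioc a b) := by
    refine MeasureTheory.integrableOn_Ioc_of_intervalIntegral_norm_bounded_left (I := g b - l) hfi htend ?_
    exact Filter.Eventually.of_forall hbound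
  refine ⟨hInt, ?_⟩
  -- value via updated function
  set g2 := Function.update g a l with hg2
  have hg2eq : ∀ z, z ≠ a → g2 z = g z := fun z hz => Function.update_of_ne hz _ _
  have hcont2 : ContinuousOn g2 (Set.Icc a b) := by
    intro x hx
    rcases eq_or_ne x a with rfl | hxa
    · rw [← continuousWithinAt_diff_self, Set.Icc_diff_left]
      have : Tendsto g (nhdsWithin x (Set.Ioc x b)) (nhds l) :=
        hlim.mono_left (nhdsWithin_mono x Set.Ioc_subset_Ioi_self)
      have h2 : g2 x = l := Function.update_self _ _ _
      rw [ContinuousWithinAt, h2]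
      refine this.congr' ?_
      filter_upwards [self_mem_nhdsWithin] with z hz
      exact (hg2eq z (ne_of_gt hz.1)).symm
    · have hx' : x ∈ Set.Ioc a b := ⟨lt_of_le_of_ne hx.1 (Ne.symm hxa), hx.2⟩
      have hg : ContinuousWithinAt g (Set.Icc a b) x := by
        refine (hcont x hx').mono_of_mem_nhdsWithin ?_
        refine mem_nhdsWithin.2 ⟨Set.Ioi a, isOpen_Ioi, hx'.1, fun z hz => ⟨hz.1, hz.2.2⟩⟩
      refine hg.congr_of_eventuallyEq ?_ (hg2eq x hxa)
      filter_upwards [(eventually_ne_nhds hxa).filter_mono nhdsWithin_le_nhds] with z hz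
      exact hg2eq z hz
  have hderiv2 : ∀ x ∈ Set.Ioo a b, HasDerivWithinAt g2 (g' x) (Set.Ioi x) x := by
    intro x hx
    have heq : g2 =ᶠ[nhds x] g := by
      filter_upwards [eventually_ne_nhds (ne_of_gt hx.1)] with z hz
      exact hg2eq z hz
    exact ((hderiv x hx).congr_of_eventuallyEq heq).hasDerivWithinAt
  have hval := intervalIntegral.integral_eq_sub_of_hasDeriv_right_of_le hab.le hcont2 hderiv2
    ((intervalIntegrable_iff_integrableOn_Ioc_of_le hab.le).2 hInt)
  rw [hval, hg2eq b (ne_of_gt hab)]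
  simp [hg2]

section helpers
variable {ρ μ lam : ℝ}

lemma upos {y : ℝ} (hμ : μ ∈ Set.Ioo (0:ℝ) 1) (hy : y ∈ Set.Ioo (0:ℝ) 1) :
    0 < Real.log y / Real.log μ :=
  div_pos_of_neg_of_neg (Real.log_neg hy.1 hy.2) (Real.log_neg hμ.1 hμ.2)

lemma hasDerivAt_T (hμ : μ ∈ Set.Ioo (0:ℝ) 1) (hlam : 0 < lam) {y : ℝ}
    (hy : y ∈ Set.Ioo (0:ℝ) 1) :
    HasDerivAt (fun y => (Real.log y / Real.log μ) ^ lam)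
      (y⁻¹ / Real.log μ * lam * (Real.log y / Real.log μ) ^ (lam - 1)) y :=
  ((Real.hasDerivAt_log hy.1.ne').div_const _).rpow_const (Or.inl (upos hμ hy).ne')

lemma hasDerivAt_g1 (hρ : ρ ∈ Set.Ioo (0:ℝ) 1) (hμ : μ ∈ Set.Ioo (0:ℝ) 1) (hlam : 0 < lam)
    {y : ℝ} (hy : y ∈ Set.Ioo (0:ℝ) 1) :
    HasDerivAt (fun y => ρ ^ ((Real.log y / Real.log μ) ^ lam))
      ((lam / y) * (Real.log ρ / Real.log μ) * (Real.log y / Real.log μ) ^ (lam - 1) *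
        ρ ^ ((Real.log y / Real.log μ) ^ lam)) y := by
  have h2 := HasDerivAt.comp y
    ((Real.hasStrictDerivAt_const_rpow hρ.1 ((Real.log y / Real.log μ) ^ lam)).hasDerivAt)
    (hasDerivAt_T hμ hlam hy)
  refine h2.congr_deriv ?_
  ring

lemma hasDerivAt_g2 (hρ : ρ ∈ Set.Ioo (0:ℝ) 1) (hμ : μ ∈ Set.Ioo (0:ℝ) 1) (hlam : 0 < lam)
    {y : ℝ} (hy : y ∈ Set.Ioo (0:ℝ) 1) :
    HasDerivAt (fun y => ((Real.log y / Real.log μ) ^ lam - 1 / Real.log ρ) *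
        ρ ^ ((Real.log y / Real.log μ) ^ lam))
      ((Real.log y / Real.log μ) ^ lam *
        ((lam / y) * (Real.log ρ / Real.log μ) * (Real.log y / Real.log μ) ^ (lam - 1) *
          ρ ^ ((Real.log y / Real.log μ) ^ lam))) y := by
  have hr : Real.log ρ ≠ 0 := (Real.log_neg hρ.1 hρ.2).ne
  have h3 := ((hasDerivAt_T hμ hlam hy).sub_const (1 / Real.log ρ)).mul
    (hasDerivAt_g1 hρ hμ hlam hy)
  have hL : Real.log μ ≠ 0 := (Real.log_neg hμ.1 hμ.2).ne
  have hy0 : y ≠ 0 := hy.1.ne'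
  refine h3.congr_deriv ?_
  generalize (Real.log y / Real.log μ) ^ (lam - 1) = A
  generalize (Real.log y / Real.log μ) ^ lam = T
  generalize hB : ρ ^ T = B
  field_simp
  ring

lemma cont_T (hμ : μ ∈ Set.Ioo (0:ℝ) 1) (hlam : 0 < lam) :
    ContinuousOn (fun y => (Real.log y / Real.log μ) ^ lam) (Set.Ioc (0:ℝ) 1) := by
  refine ContinuousOn.rpow_const ?_ (fun x _ => Or.inr hlam.le)
  exact (Real.continuousOn_log.mono (fun z hz => ne_of_gt hz.1)).div_const _

lemma cont_g1 (hρ : ρ ∈ Set.Ioo (0:ℝ) 1) (hμ : μ ∈ Set.Ioo (0:ℝ) 1) (hlam : 0 < lam) :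
    ContinuousOn (fun y => ρ ^ ((Real.log y / Real.log μ) ^ lam)) (Set.Ioc (0:ℝ) 1) :=
  (continuousOn_const).rpow (cont_T hμ hlam) (fun x _ => Or.inl hρ.1.ne')

lemma tendsto_T_atTop (hμ : μ ∈ Set.Ioo (0:ℝ) 1) (hlam : 0 < lam) :
    Tendsto (fun y => (Real.log y / Real.log μ) ^ lam) (nhdsWithin 0 (Set.Ioi (0:ℝ))) atTop := by
  have h1 : Tendsto (fun y => Real.log y / Real.log μ) (nhdsWithin 0 (Set.Ioi (0:ℝ))) atTop := by
    have := Real.tendsto_log_nhdsGT_zero.atBot_mul_const_of_neg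
      (inv_neg''.2 (Real.log_neg hμ.1 hμ.2))
    refine this.congr (fun y => ?_)
    rw [div_eq_mul_inv]
  exact (tendsto_rpow_atTop hlam).comp h1

lemma tendsto_g1 (hρ : ρ ∈ Set.Ioo (0:ℝ) 1) (hμ : μ ∈ Set.Ioo (0:ℝ) 1) (hlam : 0 < lam) :
    Tendsto (fun y => ρ ^ ((Real.log y / Real.log μ) ^ lam)) (nhdsWithin 0 (Set.Ioi (0:ℝ)))
      (nhds 0) :=
  (tendsto_rpow_atTop_of_base_lt_one ρ (by linarith [hρ.1]) hρ.2).comp (tendsto_T_atTop hμ hlam)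

lemma tendsto_zrz (hρ : ρ ∈ Set.Ioo (0:ℝ) 1) :
    Tendsto (fun z : ℝ => z * ρ ^ z) atTop (nhds 0) := by
  have hr : Real.log ρ < 0 := Real.log_neg hρ.1 hρ.2
  have hs : (0:ℝ) < -Real.log ρ := by linarith
  have h1 := (tendsto_pow_mul_exp_neg_atTop_nhds_zero 1).comp
    (Filter.Tendsto.const_mul_atTop hs tendsto_id)
  have h2 := h1.const_mul (-Real.log ρ)⁻¹
  rw [mul_zero] at h2
  refine h2.congr (fun z => ?_)
  simp only [Function.comp_apply, pow_one, id_eq]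
  rw [Real.rpow_def_of_pos hρ.1]
  have : -(-Real.log ρ * z) = Real.log ρ * z := by ring
  rw [this]
  field_simp [hr.ne]

lemma tendsto_g2 (hρ : ρ ∈ Set.Ioo (0:ℝ) 1) (hμ : μ ∈ Set.Ioo (0:ℝ) 1) (hlam : 0 < lam) :
    Tendsto (fun y => ((Real.log y / Real.log μ) ^ lam - 1 / Real.log ρ) *
        ρ ^ ((Real.log y / Real.log μ) ^ lam)) (nhdsWithin 0 (Set.Ioi (0:ℝ))) (nhds 0) := by
  have hz : Tendsto (fun z : ℝ => (z - 1 / Real.log ρ) * ρ ^ z) atTop (nhds 0) := by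
    have h2 : Tendsto (fun z : ℝ => (1 / Real.log ρ) * ρ ^ z) atTop (nhds 0) := by
      have := (tendsto_rpow_atTop_of_base_lt_one ρ (by linarith [hρ.1]) hρ.2).const_mul
        (1 / Real.log ρ)
      simpa using this
    have := (tendsto_zrz hρ).sub h2
    rw [sub_zero] at this
    refine this.congr (fun z => ?_)
    ring
  exact hz.comp (tendsto_T_atTop hμ hlam)

end helpers

theorem uw_expected_second_derivative_mu
    (ρ μ lam : ℝ) (hρ : ρ ∈ Set.Ioo (0:ℝ) 1) (hμ : μ ∈ Set.Ioo (0:ℝ) 1) (hlam : 0 < lam) :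
    ∫ y in (0:ℝ)..1,
      ((lam * (Real.log μ + 1) * (1 + Real.log ρ * (Real.log y / Real.log μ) ^ lam)
          + lam ^ 2 * Real.log ρ * (Real.log y / Real.log μ) ^ lam)
        / (μ ^ 2 * (Real.log μ) ^ 2)) *
        ((lam / y) * (Real.log ρ / Real.log μ) *
          (Real.log y / Real.log μ) ^ (lam - 1) *
          ρ ^ ((Real.log y / Real.log μ) ^ lam))
      = -lam ^ 2 / (μ ^ 2 * (Real.log μ) ^ 2) := by
  have hr : Real.log ρ < 0 := Real.log_neg hρ.1 hρ.2
  have hL : Real.log μ < 0 := Real.log_neg hμ.1 hμ.2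
  have hμ0 : μ ≠ 0 := hμ.1.ne'
  set F : ℝ → ℝ := fun y => (lam / y) * (Real.log ρ / Real.log μ) *
      (Real.log y / Real.log μ) ^ (lam - 1) * ρ ^ ((Real.log y / Real.log μ) ^ lam) with hF
  have hFpos : ∀ y ∈ Set.Ioo (0:ℝ) 1, 0 ≤ F y := by
    intro y hy
    have h1 : 0 < lam / y := div_pos hlam hy.1
    have h2 : 0 < Real.log ρ / Real.log μ := div_pos_of_neg_of_neg hr hL
    have h3 : 0 ≤ (Real.log y / Real.log μ) ^ (lam - 1) := Real.rpow_nonneg (upos hμ hy).le _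
    have h4 : 0 < ρ ^ ((Real.log y / Real.log μ) ^ lam) := Real.rpow_pos_of_pos hρ.1 _
    exact mul_nonneg (mul_nonneg (mul_nonneg h1.le h2.le) h3) h4.le
  have hres1 := myFTC_Ioc zero_lt_one (cont_g1 hρ hμ hlam)
    (fun y hy => hasDerivAt_g1 hρ hμ hlam hy) hFpos (tendsto_g1 hρ hμ hlam)
  have hres2 := myFTC_Ioc zero_lt_one
    (((cont_T hμ hlam).sub continuousOn_const).mul (cont_g1 hρ hμ hlam))
    (fun y hy => hasDerivAt_g2 hρ hμ hlam hy)
    (fun y hy => mul_nonneg (Real.rpow_nonneg (upos hμ hy).le _) (hFpos y hy))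
    (tendsto_g2 hρ hμ hlam)
  have hval1 : (∫ y in (0:ℝ)..1, F y) = 1 := by
    rw [hres1.2]
    simp [Real.log_one, Real.zero_rpow hlam.ne']
  have hval2 : (∫ y in (0:ℝ)..1, (Real.log y / Real.log μ) ^ lam * F y) = -(1 / Real.log ρ) := by
    rw [hres2.2]
    simp [Real.log_one, Real.zero_rpow hlam.ne']
  have ii1 : IntervalIntegrable F MeasureTheory.volume 0 1 :=
    (intervalIntegrable_iff_integrableOn_Ioc_of_le zero_le_one).2 hres1.1
  have ii2 : IntervalIntegrable (fun y => (Real.log y / Real.log μ) ^ lam * F y)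
      MeasureTheory.volume 0 1 :=
    (intervalIntegrable_iff_integrableOn_Ioc_of_le zero_le_one).2 hres2.1
  have key : ∫ y in (0:ℝ)..1,
      ((lam * (Real.log μ + 1) * (1 + Real.log ρ * (Real.log y / Real.log μ) ^ lam)
          + lam ^ 2 * Real.log ρ * (Real.log y / Real.log μ) ^ lam)
        / (μ ^ 2 * (Real.log μ) ^ 2)) * F y
      = ∫ y in (0:ℝ)..1,
        (lam * (Real.log μ + 1) / (μ ^ 2 * (Real.log μ) ^ 2)) * F y
        + ((lam * (Real.log μ + 1) + lam ^ 2) * Real.log ρ / (μ ^ 2 * (Real.log μ) ^ 2)) *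
            ((Real.log y / Real.log μ) ^ lam * F y) := by
    refine intervalIntegral.integral_congr (fun y _ => ?_)
    ring
  rw [show (∫ y in (0:ℝ)..1,
      ((lam * (Real.log μ + 1) * (1 + Real.log ρ * (Real.log y / Real.log μ) ^ lam)
          + lam ^ 2 * Real.log ρ * (Real.log y / Real.log μ) ^ lam)
        / (μ ^ 2 * (Real.log μ) ^ 2)) *
        ((lam / y) * (Real.log ρ / Real.log μ) *
          (Real.log y / Real.log μ) ^ (lam - 1) *
          ρ ^ ((Real.log y / Real.log μ) ^ lam)))
      = ∫ y in (0:ℝ)..1,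
      ((lam * (Real.log μ + 1) * (1 + Real.log ρ * (Real.log y / Real.log μ) ^ lam)
          + lam ^ 2 * Real.log ρ * (Real.log y / Real.log μ) ^ lam)
        / (μ ^ 2 * (Real.log μ) ^ 2)) * F y from rfl, key,
    intervalIntegral.integral_add (ii1.const_mul _) (ii2.const_mul _),
    intervalIntegral.integral_const_mul, intervalIntegral.integral_const_mul, hval1, hval2]
  field_simp [hr.ne, hL.ne]
  ring
end
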